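/- For every countable simple graph H, the disjoint union of countably infinitely many infinite stars embeds into H as a subgraph if and only if H has infinitely many vertices of infinite degree. -/

import Mathlib

/-- The disjoint union of countably many infinite stars: the `i`-th star has
center `(i, none)` and leaves `(i, some j)`. -/
def infiniteStars : SimpleGraph (ℕ × Option ℕ) where
  Adj a b := a.1 = b.1 ∧ a.2 ≠ b.2 ∧ (a.2 = none ∨ b.2 = none)
  symm := by
    constructor
    intro a b ⟨h1, h2, h3⟩
    exact ⟨h1.symm, h2.symm, h3.symm⟩
  loopless := by
    constructor
    intro a ⟨_, h2, _⟩
    exact h2 rfl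

section Aux

variable {V : Type*} (H : SimpleGraph V) (v0 : V)

open Classical in
noncomputable def pickIn (T : Set V) : V := if h : T.Nonempty then h.choose else v0

lemma pickIn_mem {T : Set V} (h : T.Nonempty) : pickIn v0 T ∈ T := by
  rw [pickIn]
  rw [dif_pos h]
  exact h.choose_spec

noncomputable def stepF (l : List V) : V :=
  if l.length % 2 = 0 then
    pickIn v0 ({v | (H.neighborSet v).Infinite} \ {v | v ∈ l})
  else
    pickIn v0 (H.neighborSet (l.getD (2 * (Nat.unpair ((l.length - 1)/2)).1) v0) \ {v | v ∈ l})

noncomputable def seqF : ℕ → List V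
  | 0 => []
  | n+1 => seqF n ++ [stepF H v0 (seqF n)]

noncomputable def gF (n : ℕ) : V := stepF H v0 (seqF H v0 n)

lemma length_seqF (n : ℕ) : (seqF H v0 n).length = n := by
  induction n with
  | zero => rfl
  | succ n ih => simp [seqF, ih]

lemma mem_seqF {v : V} {n : ℕ} : v ∈ seqF H v0 n ↔ ∃ m < n, gF H v0 m = v := by
  induction n with
  | zero => simp [seqF]
  | succ n ih =>
    simp only [seqF, List.mem_append, List.mem_singleton, ih]
    constructor
    · rintro (⟨m, hm, rfl⟩ | rfl)
      · exact ⟨m, hm.trans (Nat.lt_succ_self n), rfl⟩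
      · exact ⟨n, Nat.lt_succ_self n, rfl⟩
    · rintro ⟨m, hm, rfl⟩
      rcases Nat.lt_succ_iff_lt_or_eq.mp hm with h | rfl
      · exact Or.inl ⟨m, h, rfl⟩
      · exact Or.inr rfl

lemma getD_seqF {m n : ℕ} (h : m < n) : (seqF H v0 n).getD m v0 = gF H v0 m := by
  induction n with
  | zero => omega
  | succ n ih =>
    rcases Nat.lt_succ_iff_lt_or_eq.mp h with h' | rfl
    · rw [seqF, List.getD_append _ _ _ _ (by rw [length_seqF]; exact h')]
      exact ih h'
    · rw [seqF, List.getD_append_right _ _ _ _ (le_of_eq (length_seqF H v0 m)),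
        length_seqF, Nat.sub_self]
      rfl

lemma gF_spec (hS : {v : V | (H.neighborSet v).Infinite}.Infinite) (n : ℕ) :
    (n % 2 = 0 → gF H v0 n ∈ {v : V | (H.neighborSet v).Infinite}) ∧
    gF H v0 n ∉ seqF H v0 n ∧
    (n % 2 = 1 → H.Adj (gF H v0 (2 * (Nat.unpair ((n - 1)/2)).1)) (gF H v0 n)) := by
  induction n using Nat.strong_induction_on with
  | _ n ih =>
    rcases Nat.even_or_odd n with he | ho
    · have h2 : n % 2 = 0 := Nat.even_iff.mp he
      have hne : ({v | (H.neighborSet v).Infinite} \ {v | v ∈ seqF H v0 n}).Nonempty :=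
        (hS.diff (List.finite_toSet _)).nonempty
      have hmem := pickIn_mem v0 hne
      rw [gF, stepF, length_seqF, if_pos h2]
      refine ⟨fun _ => hmem.1, hmem.2, fun h => by omega⟩
    · have h2 : n % 2 = 1 := Nat.odd_iff.mp ho
      have h2' : ¬ n % 2 = 0 := by omega
      set c := 2 * (Nat.unpair ((n - 1)/2)).1 with hc
      have hclt : c < n := by
        have h1 : (Nat.unpair ((n - 1)/2)).1 ≤ (n - 1)/2 := Nat.unpair_left_le _
        omega
      have hceven : c % 2 = 0 := Nat.mul_mod_right 2 _
      have hcS : gF H v0 c ∈ {v : V | (H.neighborSet v).Infinite} :=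
        (ih c hclt).1 hceven
      have hgd : (seqF H v0 n).getD c v0 = gF H v0 c := getD_seqF H v0 hclt
      have hne : (H.neighborSet ((seqF H v0 n).getD c v0) \ {v | v ∈ seqF H v0 n}).Nonempty := by
        rw [hgd]
        exact (hcS.diff (List.finite_toSet _)).nonempty
      have hmem := pickIn_mem v0 hne
      rw [hgd] at hmem
      have hgn : gF H v0 n = pickIn v0 (H.neighborSet ((seqF H v0 n).getD c v0) \ {v | v ∈ seqF H v0 n}) := by
        rw [gF, stepF, length_seqF, if_neg h2']
      rw [hgd] at hgn
      rw [hgn]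
      exact ⟨fun h => by omega, hmem.2, fun _ => hmem.1⟩

lemma gF_ne (hS : {v : V | (H.neighborSet v).Infinite}.Infinite) {m n : ℕ} (h : m < n) :
    gF H v0 m ≠ gF H v0 n := by
  intro he
  have h1 : gF H v0 m ∈ seqF H v0 n := (mem_seqF H v0).mpr ⟨m, h, rfl⟩
  rw [he] at h1
  exact (gF_spec H v0 hS n).2.1 h1

lemma gF_injective (hS : {v : V | (H.neighborSet v).Infinite}.Infinite) :
    Function.Injective (gF H v0) := by
  intro m n hmn
  rcases lt_trichotomy m n with h | h | h
  · exact absurd hmn (gF_ne H v0 hS h)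
  · exact h
  · exact absurd hmn.symm (gF_ne H v0 hS h)

def enc : ℕ × Option ℕ → ℕ := fun p =>
  match p.2 with
  | none => 2 * p.1
  | some j => 2 * Nat.pair p.1 j + 1

lemma enc_none (i : ℕ) : enc (i, none) = 2 * i := rfl
lemma enc_some (i j : ℕ) : enc (i, some j) = 2 * Nat.pair i j + 1 := rfl

lemma enc_injective : Function.Injective enc := by
  rintro ⟨i, oi⟩ ⟨k, ok⟩ h
  match oi, ok with
  | none, none =>
    rw [enc_none, enc_none] at h
    have : i = k := by omega
    rw [this]
  | none, some j => rw [enc_none, enc_some] at h; exact absurd h (by omega)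
  | some j, none => rw [enc_some, enc_none] at h; exact absurd h (by omega)
  | some j, some l =>
    rw [enc_some, enc_some] at h
    have hp : Nat.pair i j = Nat.pair k l := by omega
    have h2 := congrArg Nat.unpair hp
    simp only [Nat.unpair_pair] at h2
    obtain ⟨rfl, rfl⟩ : i = k ∧ j = l := by
      constructor <;> [exact congrArg Prod.fst h2; exact congrArg Prod.snd h2]
    rfl

end Aux

theorem stmt10 {V : Type*} [Countable V] (H : SimpleGraph V) :
    (∃ f : ℕ × Option ℕ → V, Function.Injective f ∧
      ∀ a b : ℕ × Option ℕ, infiniteStars.Adj a b → H.Adj (f a) (f b)) ↔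
    {v : V | (H.neighborSet v).Infinite}.Infinite := by
  constructor
  · rintro ⟨f, hinj, hadj⟩
    apply Set.infinite_of_injective_forall_mem (f := fun i : ℕ => f (i, none))
      (fun i j hij => by simpa using hinj hij)
    intro i
    apply Set.infinite_of_injective_forall_mem (f := fun j : ℕ => f (i, some j))
      (fun j k hjk => by simpa using hinj hjk)
    intro j
    have : infiniteStars.Adj (i, none) (i, some j) := ⟨rfl, by simp, Or.inl rfl⟩
    exact (H.mem_neighborSet _ _).mpr (hadj _ _ this)
  · intro hS
    have v0 : V := hS.nonempty.choose
    refine ⟨fun p => gF H v0 (enc p), (gF_injective H v0 hS).comp enc_injective, ?_⟩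
    rintro ⟨i, oi⟩ ⟨k, ok⟩ ⟨h1, h2, h3⟩
    simp only at h1; subst h1
    have key : ∀ j : ℕ, H.Adj (gF H v0 (2 * i)) (gF H v0 (2 * Nat.pair i j + 1)) := by
      intro j
      have hodd : (2 * Nat.pair i j + 1) % 2 = 1 := by omega
      have := (gF_spec H v0 hS (2 * Nat.pair i j + 1)).2.2 hodd
      have hsimp : (2 * Nat.pair i j + 1 - 1) / 2 = Nat.pair i j := by omega
      rw [hsimp, Nat.unpair_pair] at this
      exact this
    match oi, ok with
    | none, none => simp at h2
    | none, some j => exact key j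
    | some j, none => exact (key j).symm
    | some j, some l => simp at h3
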